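/- Key inequality: if w : M → ℝ is a continuous subsolution (w ≤ T(w), critical value 0), and x̄^λ = (x^λ_{-n}) is a minimizing sequence for u_λ(x^λ_0), then u_λ(x^λ_0) ≥ w(x^λ_0) − ∫_{M×M} w(x) dμ̃^λ_{x̄^λ}(x,y). -/

import Mathlib

open MeasureTheory

/-- The discounted occupation measure `μ̃^λ_{x̄} = (1-λ) ∑ λⁿ δ_{(x_{-n-1}, x_{-n})}`. -/
noncomputable def discountedOccupation {M : Type*} [MeasurableSpace M]
    (lam : ℝ) (p : ℕ → M) : Measure (M × M) :=
  Measure.sum fun n : ℕ =>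
    (ENNReal.ofReal ((1 - lam) * lam ^ n)) • Measure.dirac (p (n + 1), p n)

/-- Key inequality: if `w` is a continuous subsolution of the critical equation
(critical value `0`) and `x̄^λ` is a minimizing backward sequence for `u_λ(x^λ_0)`,
then `u_λ(x^λ_0) ≥ w(x^λ_0) - ∫ w(x) dμ̃^λ_{x̄^λ}(x, y)`. -/
theorem key_inequality_subsolution
    {M : Type*} [MetricSpace M] [CompactSpace M] [Nonempty M]
    [MeasurableSpace M] [BorelSpace M]
    (c : M × M → ℝ) (hc : Continuous c)
    (hcrit : ∃ v : C(M, ℝ), ∀ x : M, v x = ⨅ y : M, (v y + c (y, x)))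
    (w : C(M, ℝ)) (hw : ∀ x : M, w x ≤ ⨅ y : M, (w y + c (y, x)))
    (lam : ℝ) (hlam0 : 0 < lam) (hlam1 : lam < 1)
    (u : C(M, ℝ))
    (hu : ∀ x : M, u x = ⨅ y : M, (lam * u y + c (y, x)))
    (p : ℕ → M)
    (hmin : u (p 0) = ∑' n : ℕ, lam ^ n * c (p (n + 1), p n))
    (hminimal : ∀ q : ℕ → M, q 0 = p 0 →
      u (p 0) ≤ ∑' n : ℕ, lam ^ n * c (q (n + 1), q n)) :
    u (p 0) ≥ w (p 0) - ∫ z : M × M, w z.1 ∂(discountedOccupation lam p) := by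
  have hlamnn : (0:ℝ) ≤ lam := hlam0.le
  have hgeo : Summable (fun n : ℕ => lam ^ n) :=
    summable_geometric_of_lt_one hlamnn hlam1
  -- bound for c
  obtain ⟨z0, -, hz0⟩ := isCompact_univ.exists_isMaxOn (Set.univ_nonempty : (Set.univ : Set (M × M)).Nonempty)
      (continuous_abs.comp hc).continuousOn
  set Cc : ℝ := |c z0| with hCcdef
  have hCc : ∀ z : M × M, |c z| ≤ Cc := fun z => hz0 (Set.mem_univ z)
  -- bound for w
  obtain ⟨y0, -, hy0⟩ := isCompact_univ.exists_isMaxOn (Set.univ_nonempty : (Set.univ : Set M).Nonempty)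
      (continuous_abs.comp w.continuous).continuousOn
  set Cw : ℝ := |w y0| with hCwdef
  have hCw : ∀ y : M, |w y| ≤ Cw := fun y => hy0 (Set.mem_univ y)
  -- termwise inequality
  have hterm : ∀ n : ℕ, w (p n) - w (p (n + 1)) ≤ c (p (n + 1), p n) := by
    intro n
    have hbdd : BddBelow (Set.range fun y : M => w y + c (y, p n)) := by
      refine ⟨-(Cw + Cc), ?_⟩
      rintro r ⟨y, rfl⟩
      dsimp only
      have h1 : -Cw ≤ w y := neg_le_of_abs_le (hCw y)
      have h2 : -Cc ≤ c (y, p n) := neg_le_of_abs_le (hCc _)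
      linarith
    have := (hw (p n)).trans (ciInf_le hbdd (p (n + 1)))
    linarith
  -- summabilities
  have ha : Summable (fun n : ℕ => lam ^ n * c (p (n + 1), p n)) := by
    refine Summable.of_norm_bounded (hgeo.mul_right Cc) ?_
    intro n
    rw [norm_mul, norm_pow, Real.norm_eq_abs, Real.norm_eq_abs, abs_of_nonneg hlamnn]
    exact mul_le_mul_of_nonneg_left (hCc _) (pow_nonneg hlamnn n)
  have hw1 : Summable (fun n : ℕ => lam ^ n * w (p n)) := by
    refine Summable.of_norm_bounded (hgeo.mul_right Cw) ?_
    intro n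
    rw [norm_mul, norm_pow, Real.norm_eq_abs, Real.norm_eq_abs, abs_of_nonneg hlamnn]
    exact mul_le_mul_of_nonneg_left (hCw _) (pow_nonneg hlamnn n)
  have hw2 : Summable (fun n : ℕ => lam ^ n * w (p (n + 1))) := by
    refine Summable.of_norm_bounded (hgeo.mul_right Cw) ?_
    intro n
    rw [norm_mul, norm_pow, Real.norm_eq_abs, Real.norm_eq_abs, abs_of_nonneg hlamnn]
    exact mul_le_mul_of_nonneg_left (hCw _) (pow_nonneg hlamnn n)
  have hb : Summable (fun n : ℕ => lam ^ n * (w (p n) - w (p (n + 1)))) := by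
    have := hw1.sub hw2
    simpa [mul_sub] using this
  set S2 : ℝ := ∑' n : ℕ, lam ^ n * w (p (n + 1)) with hS2
  -- telescoping sum
  have htel : (∑' n : ℕ, lam ^ n * (w (p n) - w (p (n + 1)))) = w (p 0) - (1 - lam) * S2 := by
    have h1 : (∑' n : ℕ, lam ^ n * (w (p n) - w (p (n + 1))))
        = (∑' n : ℕ, lam ^ n * w (p n)) - S2 := by
      rw [hS2, ← Summable.tsum_sub hw1 hw2]
      congr 1; funext n; ring
    have h2 : (∑' n : ℕ, lam ^ n * w (p n)) = w (p 0) + lam * S2 := by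
      rw [Summable.tsum_eq_zero_add hw1]
      simp only [pow_zero, one_mul]
      congr 1
      rw [hS2, ← tsum_mul_left]
      congr 1; funext n; ring
    rw [h1, h2]; ring
  -- the sum inequality
  have hsum : w (p 0) - (1 - lam) * S2 ≤ u (p 0) := by
    rw [hmin, ← htel]
    refine Summable.tsum_le_tsum (fun n => ?_) hb ha
    exact mul_le_mul_of_nonneg_left (hterm n) (pow_nonneg hlamnn n)
  -- compute the integral
  have hnn : ∀ n : ℕ, 0 ≤ (1 - lam) * lam ^ n := fun n =>
    mul_nonneg (by linarith) (pow_nonneg hlamnn n)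
  have hcoef : Summable (fun n : ℕ => (1 - lam) * lam ^ n) := hgeo.mul_left _
  haveI hfin : IsFiniteMeasure (discountedOccupation lam p) := by
    constructor
    rw [discountedOccupation, Measure.sum_apply _ MeasurableSet.univ]
    simp only [Measure.smul_apply, measure_univ, smul_eq_mul, mul_one]
    rw [← ENNReal.ofReal_tsum_of_nonneg hnn hcoef]
    exact ENNReal.ofReal_lt_top
  have hint : Integrable (fun z : M × M => w z.1) (discountedOccupation lam p) := by
    refine Integrable.mono' (integrable_const Cw)
      ((w.continuous.comp continuous_fst).aestronglyMeasurable) ?_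
    exact ae_of_all _ fun z => by rw [Real.norm_eq_abs]; exact hCw z.1
  have hI : (∫ z : M × M, w z.1 ∂(discountedOccupation lam p)) = (1 - lam) * S2 := by
    rw [discountedOccupation] at hint ⊢
    rw [integral_sum_measure hint]
    have hterm' : ∀ n : ℕ, (∫ z : M × M, w z.1
        ∂((ENNReal.ofReal ((1 - lam) * lam ^ n)) • Measure.dirac (p (n + 1), p n)))
        = (1 - lam) * (lam ^ n * w (p (n + 1))) := by
      intro n
      rw [integral_smul_measure, integral_dirac, ENNReal.toReal_ofReal (hnn n)]
      simp [mul_assoc]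
    rw [tsum_congr hterm']
    rw [hS2, ← tsum_mul_left]
  rw [ge_iff_le, hI]
  linarith
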